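/- (C¹ regularity through one bounce.) Let f₀ : ℝ² × ℝ² → ℝ be continuously differentiable on (closed unit disk) × ℝ², satisfying the specular boundary condition f₀(x,v) = f₀(x, R_x v) for all |x| = 1 and all v ∈ ℝ², and the initial-boundary compatibility condition ∇_x f₀(x,v) = ∇_x f₀(x, R_x v) R_x − 2 ∇_v f₀(x, R_x v) A_{v,x} for all (x,v) ∈ γ₋. Define F(t,x,v) := f₀(x − t·v, v) if t ≤ t_b(x,v), and F(t,x,v) := f₀(x_b(x,v) − (t − t_b(x,v))·R_{x_b(x,v)} v, R_{x_b(x,v)} v) if t > t_b(x,v). Then F is continuously differentiable on the one-bounce region U := {(t,x,v) : t > 0, |x| ≤ 1, v ≠ 0, v·x ≠ 0 whenever |x| = 1, and t < t_b(x,v) + 2|v·x_b(x,v)|/|v|²}, and F satisfies the free transport equation ∂_t F + v·∇_x F = 0 on U. -/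

import Mathlib

noncomputable section

open Matrix Real Set

/-- The Euclidean plane ℝ². -/
abbrev E : Type := EuclideanSpace ℝ (Fin 2)

/-- Dot product on ℝ². -/
def dot (a b : E) : ℝ := a 0 * b 0 + a 1 * b 1

/-- Build a vector of ℝ² from its components. -/
def toE (f : Fin 2 → ℝ) : E := (WithLp.equiv 2 (Fin 2 → ℝ)).symm f

/-- Tensor (outer) product a⊗b, (a⊗b)_{ij} = aᵢ bⱼ. -/
def outer (a b : E) : Matrix (Fin 2) (Fin 2) ℝ := Matrix.of fun i j => a i * b j

/-- Matrix acting on a column vector. -/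
def mulV (M : Matrix (Fin 2) (Fin 2) ℝ) (v : E) : E := toE fun i => M i 0 * v 0 + M i 1 * v 1

/-- Row vector multiplied by a matrix on the right. -/
def vMulM (w : E) (M : Matrix (Fin 2) (Fin 2) ℝ) : E := toE fun j => w 0 * M 0 j + w 1 * M 1 j

/-- Specular reflection matrix R_n = I - 2 n⊗n. -/
def Rmat (n : E) : Matrix (Fin 2) (Fin 2) ℝ := 1 - (2 : ℝ) • outer n n

/-- The matrix A_{v,n} = ((v·n) I + n⊗v)(I - (v⊗n)/(v·n)). -/
def Amat (v n : E) : Matrix (Fin 2) (Fin 2) ℝ :=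
  (dot v n • (1 : Matrix (Fin 2) (Fin 2) ℝ) + outer n v) *
    (1 - (dot v n)⁻¹ • outer v n)

/-- Counterclockwise rotation by π/2. -/
def Qmat : Matrix (Fin 2) (Fin 2) ℝ := !![0, -1; 1, 0]

/-- Backward exit time from the closed unit disk. -/
def tb (x v : E) : ℝ := sSup {s : ℝ | 0 ≤ s ∧ ‖x - s • v‖ ≤ 1}

/-- Backward exit point from the closed unit disk. -/
def xb (x v : E) : E := x - tb x v • v

/-- The i-th column of a 2×2 matrix, as a vector of ℝ². -/
def colE (M : Matrix (Fin 2) (Fin 2) ℝ) (i : Fin 2) : E := toE fun k => M k i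

/-- A 2×2 matrix as a continuous linear map ℝ² → ℝ². -/
def toCLM (M : Matrix (Fin 2) (Fin 2) ℝ) : E →L[ℝ] E :=
  LinearMap.toContinuousLinearMap (Matrix.toEuclideanLin M)

/-- The phase space (closed unit disk) × ℝ². -/
def S : Set (E × E) := {p : E × E | ‖p.1‖ ≤ 1}

/-- The gradient in x of f₀ within (closed unit disk) × ℝ², as a row vector. -/
def gradx (f : E × E → ℝ) (x v : E) : E :=
  toE fun i => fderivWithin ℝ f S (x, v) (EuclideanSpace.single i 1, 0)

/-- The gradient in v of f₀ within (closed unit disk) × ℝ², as a row vector. -/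
def gradv (f : E × E → ℝ) (x v : E) : E :=
  toE fun i => fderivWithin ℝ f S (x, v) (0, EuclideanSpace.single i 1)

/-- The one-bounce mild solution F(t,x,v). -/
def Ffun (f₀ : E × E → ℝ) (p : ℝ × E × E) : ℝ :=
  if p.1 ≤ tb p.2.1 p.2.2 then f₀ (p.2.1 - p.1 • p.2.2, p.2.2)
  else
    f₀ (xb p.2.1 p.2.2 - (p.1 - tb p.2.1 p.2.2) • mulV (Rmat (xb p.2.1 p.2.2)) p.2.2,
        mulV (Rmat (xb p.2.1 p.2.2)) p.2.2)

/-- The one-bounce region U. -/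
def U : Set (ℝ × E × E) :=
  {p : ℝ × E × E |
    0 < p.1 ∧ ‖p.2.1‖ ≤ 1 ∧ p.2.2 ≠ 0 ∧ (‖p.2.1‖ = 1 → dot p.2.2 p.2.1 ≠ 0) ∧
    p.1 < tb p.2.1 p.2.2 + 2 * |dot p.2.2 (xb p.2.1 p.2.2)| / ‖p.2.2‖ ^ 2}

-- ===== auxiliary development =====

lemma toE_apply (f : Fin 2 → ℝ) (i : Fin 2) : toE f i = f i := rfl

lemma inner_eq_dot (a b : E) : (inner ℝ a b : ℝ) = dot a b := by
  simp [PiLp.inner_apply, RCLike.inner_apply, Fin.sum_univ_two, dot, mul_comm]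

lemma norm_sq_coord (y : E) : ‖y‖ ^ 2 = y 0 ^ 2 + y 1 ^ 2 := by
  rw [← real_inner_self_eq_norm_sq, inner_eq_dot]
  simp [dot]; ring

lemma dot_comm (a b : E) : dot a b = dot b a := by simp [dot]; ring

def Dq (x v : E) : ℝ := dot x v ^ 2 + ‖v‖ ^ 2 * (1 - ‖x‖ ^ 2)
def Tf (x v : E) : ℝ := (dot x v + Real.sqrt (Dq x v)) / ‖v‖ ^ 2
def rmf (x v : E) : ℝ := (dot x v - Real.sqrt (Dq x v)) / ‖v‖ ^ 2

lemma normv_pos {v : E} (hv : v ≠ 0) : 0 < ‖v‖ ^ 2 := by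
  have := norm_pos_iff.mpr hv; positivity

lemma norm_sub_smul_sq (x v : E) (s : ℝ) :
    ‖x - s • v‖ ^ 2 = ‖x‖ ^ 2 - 2 * s * dot x v + s ^ 2 * ‖v‖ ^ 2 := by
  simp only [norm_sq_coord, PiLp.sub_apply, PiLp.smul_apply, smul_eq_mul, dot]
  ring

lemma Dq_nonneg {x v : E} (hx : ‖x‖ ≤ 1) : 0 ≤ Dq x v := by
  have h1 : ‖x‖ ^ 2 ≤ 1 := by nlinarith [norm_nonneg x]
  have := sq_nonneg (dot x v)
  have := sq_nonneg ‖v‖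
  simp only [Dq]; nlinarith

/-- factorization of the quadratic -/
lemma quad_factor {x v : E} (hv : v ≠ 0) (hD : 0 ≤ Dq x v) (s : ℝ) :
    ‖x - s • v‖ ^ 2 - 1 = ‖v‖ ^ 2 * (s - rmf x v) * (s - Tf x v) := by
  have ha := (normv_pos hv).ne'
  have hs : Real.sqrt (Dq x v) ^ 2 = Dq x v := Real.sq_sqrt hD
  have hDq : Dq x v = dot x v ^ 2 + ‖v‖ ^ 2 * (1 - ‖x‖ ^ 2) := rfl
  rw [norm_sub_smul_sq, rmf, Tf]
  field_simp
  linear_combination hs + hDq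

lemma rmf_le_Tf {x v : E} (hv : v ≠ 0) (hD : 0 ≤ Dq x v) : rmf x v ≤ Tf x v := by
  have ha := normv_pos hv
  have := Real.sqrt_nonneg (Dq x v)
  rw [rmf, Tf]
  gcongr
  linarith

lemma mem_disk_iff {x v : E} (hv : v ≠ 0) (hD : 0 ≤ Dq x v) (s : ℝ) :
    ‖x - s • v‖ ≤ 1 ↔ rmf x v ≤ s ∧ s ≤ Tf x v := by
  have ha := normv_pos hv
  have h1 : ‖x - s • v‖ ≤ 1 ↔ ‖x - s • v‖ ^ 2 - 1 ≤ 0 := by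
    constructor
    · intro h; nlinarith [norm_nonneg (x - s • v)]
    · intro h; nlinarith [norm_nonneg (x - s • v)]
  rw [h1, quad_factor hv hD s]
  constructor
  · intro h
    by_contra hc
    push_neg at hc
    rcases le_or_gt (rmf x v) s with h2 | h2
    · have h3 := hc h2
      have := rmf_le_Tf hv hD
      have hp : 0 < ‖v‖ ^ 2 * (s - rmf x v) * (s - Tf x v) := by
        apply mul_pos (mul_pos ha (by linarith)) (by linarith)
      linarith
    · have := rmf_le_Tf hv hD
      have hp : 0 < ‖v‖ ^ 2 * (s - rmf x v) * (s - Tf x v) := by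
        apply mul_pos_of_neg_of_neg (mul_neg_of_pos_of_neg ha (by linarith)) (by linarith)
      linarith
  · rintro ⟨h2, h3⟩
    exact mul_nonpos_of_nonneg_of_nonpos (mul_nonneg ha.le (by linarith)) (by linarith)

lemma sqrt_ge_dot {x v : E} (hx : ‖x‖ ≤ 1) : dot x v ≤ Real.sqrt (Dq x v) := by
  have h1 : dot x v ≤ |dot x v| := le_abs_self _
  have h2 : |dot x v| = Real.sqrt (dot x v ^ 2) := (Real.sqrt_sq_eq_abs _).symm
  have h3 : dot x v ^ 2 ≤ Dq x v := by
    have : ‖x‖ ^ 2 ≤ 1 := by nlinarith [norm_nonneg x]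
    have := sq_nonneg ‖v‖
    simp only [Dq]; nlinarith
  calc dot x v ≤ Real.sqrt (dot x v ^ 2) := by rw [← h2]; exact h1
    _ ≤ Real.sqrt (Dq x v) := Real.sqrt_le_sqrt h3

lemma rmf_nonpos {x v : E} (hx : ‖x‖ ≤ 1) (hv : v ≠ 0) : rmf x v ≤ 0 :=
  div_nonpos_of_nonpos_of_nonneg (by linarith [sqrt_ge_dot (v := v) hx]) (normv_pos hv).le

lemma Tf_nonneg {x v : E} (hx : ‖x‖ ≤ 1) (hv : v ≠ 0) : 0 ≤ Tf x v := by
  have h := sqrt_ge_dot (v := v) hx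
  have h2 : dot x v ≤ |dot x v| := le_abs_self _
  have h3 : -dot x v ≤ Real.sqrt (Dq x v) := by
    have : -dot x v ≤ |dot x v| := neg_le_abs _
    have h2' : |dot x v| = Real.sqrt (dot x v ^ 2) := (Real.sqrt_sq_eq_abs _).symm
    have h3' : dot x v ^ 2 ≤ Dq x v := by
      have : ‖x‖ ^ 2 ≤ 1 := by nlinarith [norm_nonneg x]
      have := sq_nonneg ‖v‖
      simp only [Dq]; nlinarith
    calc -dot x v ≤ Real.sqrt (dot x v ^ 2) := by rw [← h2']; exact neg_le_abs _
      _ ≤ Real.sqrt (Dq x v) := Real.sqrt_le_sqrt h3'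
  exact div_nonneg (by linarith) (le_of_lt (normv_pos hv))

lemma tb_eq_Tf {x v : E} (hx : ‖x‖ ≤ 1) (hv : v ≠ 0) : tb x v = Tf x v := by
  have hD := Dq_nonneg (v := v) hx
  apply IsGreatest.csSup_eq
  constructor
  · exact ⟨Tf_nonneg hx hv, (mem_disk_iff hv hD _).mpr ⟨rmf_le_Tf hv hD, le_rfl⟩⟩
  · rintro s ⟨h0, h1⟩
    exact ((mem_disk_iff hv hD s).mp h1).2

lemma norm_xb_eq {x v : E} (hx : ‖x‖ ≤ 1) (hv : v ≠ 0) : ‖xb x v‖ = 1 := by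
  have hD := Dq_nonneg (v := v) hx
  have h := quad_factor hv hD (Tf x v)
  rw [xb, tb_eq_Tf hx hv]
  have h2 : ‖x - Tf x v • v‖ ^ 2 = 1 := by rw [← sub_eq_zero]; rw [h]; ring
  nlinarith [norm_nonneg (x - Tf x v • v)]

lemma dot_v_xb {x v : E} (hx : ‖x‖ ≤ 1) (hv : v ≠ 0) :
    dot v (xb x v) = -Real.sqrt (Dq x v) := by
  have ha := (normv_pos hv).ne'
  have h : dot v (x - Tf x v • v) = dot v x - Tf x v * ‖v‖ ^ 2 := by
    simp only [dot, PiLp.sub_apply, PiLp.smul_apply, smul_eq_mul, norm_sq_coord]; ring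
  rw [xb, tb_eq_Tf hx hv, h, Tf, dot_comm]
  field_simp
  ring

-- CHUNK 2 -----------------------------------------------------------------
def reflect (n u : E) : E := u - (2 * dot u n) • n

lemma ext2 {a b : E} (h0 : a 0 = b 0) (h1 : a 1 = b 1) : a = b := by
  ext i; fin_cases i <;> assumption

lemma reflect_eq_mulV (n u : E) : mulV (Rmat n) u = reflect n u := by
  apply ext2 <;>
    simp [mulV, reflect, Rmat, outer, toE, Matrix.one_apply, dot, PiLp.sub_apply,
      PiLp.smul_apply, smul_eq_mul, Matrix.sub_apply, Matrix.smul_apply] <;> ring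

def Oset : Set (ℝ × E × E) :=
  {q | q.2.2 ≠ 0 ∧ 0 < Dq q.2.1 q.2.2 ∧ 0 < q.1 ∧
    q.1 < Tf q.2.1 q.2.2 + 2 * Real.sqrt (Dq q.2.1 q.2.2) / ‖q.2.2‖ ^ 2}
def Cset : Set (ℝ × E × E) := {q | ‖q.2.1‖ ≤ 1}

lemma Dq_pos_of_U {q : ℝ × E × E} (hq : q ∈ U) : 0 < Dq q.2.1 q.2.2 := by
  obtain ⟨ht, hx, hv, hbd, hlt⟩ := hq
  rcases lt_or_eq_of_le hx with h | h
  · have h1 : 0 < ‖q.2.2‖ ^ 2 := normv_pos hv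
    have h2 : 0 < 1 - ‖q.2.1‖ ^ 2 := by nlinarith [norm_nonneg q.2.1]
    have := sq_nonneg (dot q.2.1 q.2.2)
    simp only [Dq]; nlinarith
  · have hb := hbd h
    have h2 : ‖q.2.1‖ ^ 2 = 1 := by rw [h]; norm_num
    have h3 : dot q.2.1 q.2.2 ≠ 0 := by rwa [dot_comm]
    simp only [Dq, h2]
    have h4 : 0 < dot q.2.1 q.2.2 ^ 2 := by
      rcases h3.lt_or_gt with h5 | h5 <;> nlinarith
    nlinarith

lemma U_eq : U = Cset ∩ Oset := by
  ext q
  constructor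
  · intro hq
    have hD := Dq_pos_of_U hq
    obtain ⟨ht, hx, hv, hbd, hlt⟩ := hq
    refine ⟨hx, hv, hD, ht, ?_⟩
    rw [tb_eq_Tf hx hv, dot_v_xb hx hv, abs_neg, abs_of_nonneg (Real.sqrt_nonneg _)] at hlt
    exact hlt
  · rintro ⟨hx, hv, hD, ht, hlt⟩
    refine ⟨ht, hx, hv, ?_, ?_⟩
    · intro h1 h2
      rw [Dq, dot_comm] at hD
      rw [h2] at hD
      have : ‖q.2.1‖ ^ 2 = 1 := by rw [h1]; norm_num
      rw [this] at hD
      simp at hD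
    · rw [tb_eq_Tf hx hv, dot_v_xb hx hv, abs_neg, abs_of_nonneg (Real.sqrt_nonneg _)]
      exact hlt

-- geometry of reflected segment
lemma dot_self_eq (y : E) : dot y y = ‖y‖ ^ 2 := by simp [dot, norm_sq_coord]; ring

def Xf (q : ℝ × E × E) : E := q.2.1 - Tf q.2.1 q.2.2 • q.2.2
def Wf (q : ℝ × E × E) : E := reflect (Xf q) q.2.2
def Pf (q : ℝ × E × E) : E := Xf q - (q.1 - Tf q.2.1 q.2.2) • Wf q
def Psi2 (q : ℝ × E × E) : E × E := (Pf q, Wf q)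
def Psi1 (q : ℝ × E × E) : E × E := (q.2.1 - q.1 • q.2.2, q.2.2)

lemma Xf_eq_xb {q : ℝ × E × E} (hx : ‖q.2.1‖ ≤ 1) (hv : q.2.2 ≠ 0) :
    Xf q = xb q.2.1 q.2.2 := by rw [Xf, xb, tb_eq_Tf hx hv]

lemma norm_Xf {q : ℝ × E × E} (hx : ‖q.2.1‖ ≤ 1) (hv : q.2.2 ≠ 0) : ‖Xf q‖ = 1 := by
  rw [Xf_eq_xb hx hv]; exact norm_xb_eq hx hv

lemma dot_v_Xf {q : ℝ × E × E} (hx : ‖q.2.1‖ ≤ 1) (hv : q.2.2 ≠ 0) :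
    dot q.2.2 (Xf q) = -Real.sqrt (Dq q.2.1 q.2.2) := by
  rw [Xf_eq_xb hx hv]; exact dot_v_xb hx hv

lemma dot_reflect_v (b v : E) (hb : dot b b = 1) : dot b (reflect b v) = - dot v b := by
  simp only [reflect, dot, PiLp.sub_apply, PiLp.smul_apply, smul_eq_mul] at *
  linear_combination (-2 * (v 0 * b 0 + v 1 * b 1)) * hb

lemma normsq_reflect (b v : E) (hb : dot b b = 1) : dot (reflect b v) (reflect b v) = dot v v := by
  simp only [reflect, dot, PiLp.sub_apply, PiLp.smul_apply, smul_eq_mul] at *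
  linear_combination (4 * (v 0 * b 0 + v 1 * b 1) ^ 2) * hb

lemma norm_Pf_le {q : ℝ × E × E} (hq : q ∈ U) (h : Tf q.2.1 q.2.2 ≤ q.1) : ‖Pf q‖ ≤ 1 := by
  obtain ⟨hx, hv, hD, ht, hlt⟩ := (U_eq ▸ hq : q ∈ Cset ∩ Oset)
  set b := Xf q with hbdef
  have hb1 : ‖b‖ = 1 := norm_Xf hx hv
  have hb : dot b b = 1 := by rw [dot_self_eq, hb1]; norm_num
  have hdv : dot q.2.2 b = -Real.sqrt (Dq q.2.1 q.2.2) := dot_v_Xf hx hv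
  set τ := q.1 - Tf q.2.1 q.2.2 with hτ
  have hτ0 : 0 ≤ τ := by linarith
  have hτ1 : τ < 2 * Real.sqrt (Dq q.2.1 q.2.2) / ‖q.2.2‖ ^ 2 := by rw [hτ]; linarith
  have hW1 : dot b (Wf q) = Real.sqrt (Dq q.2.1 q.2.2) := by
    rw [Wf, ← hbdef, dot_reflect_v b q.2.2 hb, hdv]; ring
  have hW2 : dot (Wf q) (Wf q) = ‖q.2.2‖ ^ 2 := by
    rw [Wf, ← hbdef, normsq_reflect b q.2.2 hb, dot_self_eq]
  have hnorm : ‖Pf q‖ ^ 2 = 1 - 2 * τ * dot b (Wf q) + τ ^ 2 * dot (Wf q) (Wf q) := by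
    rw [Pf, ← hbdef, ← hτ]
    simp only [norm_sq_coord, PiLp.sub_apply, PiLp.smul_apply, smul_eq_mul, dot] at *
    linear_combination hb
  rw [hW1, hW2] at hnorm
  have ha : 0 < ‖q.2.2‖ ^ 2 := normv_pos hv
  have h2 : τ * ‖q.2.2‖^2 ≤ 2 * Real.sqrt (Dq q.2.1 q.2.2) := by
    rw [div_eq_mul_inv] at hτ1
    calc τ * ‖q.2.2‖^2 ≤ (2 * Real.sqrt (Dq q.2.1 q.2.2) * (‖q.2.2‖ ^ 2)⁻¹) * ‖q.2.2‖^2 := by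
          apply mul_le_mul_of_nonneg_right hτ1.le ha.le
      _ = 2 * Real.sqrt (Dq q.2.1 q.2.2) := by field_simp
  have hfin : ‖Pf q‖ ^ 2 ≤ 1 := by nlinarith
  nlinarith [norm_nonneg (Pf q)]

lemma norm_Psi1_le {q : ℝ × E × E} (hq : q ∈ U) (h : q.1 ≤ Tf q.2.1 q.2.2) :
    ‖q.2.1 - q.1 • q.2.2‖ ≤ 1 := by
  obtain ⟨hx, hv, hD, ht, hlt⟩ := (U_eq ▸ hq : q ∈ Cset ∩ Oset)
  exact (mem_disk_iff hv hD.le q.1).mpr ⟨le_trans (rmf_nonpos hx hv) ht.le, h⟩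

-- CHUNK 3: calculus infrastructure -----------------------------------------
open ContinuousLinearMap in
def CLMt : (ℝ × E × E) →L[ℝ] ℝ := fst ℝ ℝ (E × E)
open ContinuousLinearMap in
def CLMx : (ℝ × E × E) →L[ℝ] E := (fst ℝ E E).comp (snd ℝ ℝ (E × E))
open ContinuousLinearMap in
def CLMv : (ℝ × E × E) →L[ℝ] E := (snd ℝ E E).comp (snd ℝ ℝ (E × E))

@[simp] lemma CLMt_apply (q : ℝ × E × E) : CLMt q = q.1 := rfl
@[simp] lemma CLMx_apply (q : ℝ × E × E) : CLMx q = q.2.1 := rfl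
@[simp] lemma CLMv_apply (q : ℝ × E × E) : CLMv q = q.2.2 := rfl

def Tq (q : ℝ × E × E) : ℝ := Tf q.2.1 q.2.2
def LTq (q : ℝ × E × E) : (ℝ × E × E) →L[ℝ] ℝ := fderiv ℝ Tq q
def sf (q : ℝ × E × E) : ℝ := dot q.2.2 (Xf q)
def DX (q : ℝ × E × E) : (ℝ × E × E) →L[ℝ] E :=
  CLMx - (Tq q • CLMv + (LTq q).smulRight q.2.2)
def Ds (q : ℝ × E × E) : (ℝ × E × E) →L[ℝ] ℝ :=
  (innerSL ℝ (Xf q)).comp CLMv + (innerSL ℝ q.2.2).comp (DX q)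
def DW (q : ℝ × E × E) : (ℝ × E × E) →L[ℝ] E :=
  CLMv - ((2 * sf q) • DX q + ((2 : ℝ) • Ds q).smulRight (Xf q))
def Dtau (q : ℝ × E × E) : (ℝ × E × E) →L[ℝ] ℝ := CLMt - LTq q
def DP (q : ℝ × E × E) : (ℝ × E × E) →L[ℝ] E :=
  DX q - ((q.1 - Tq q) • DW q + (Dtau q).smulRight (Wf q))
def M2 (q : ℝ × E × E) : (ℝ × E × E) →L[ℝ] (E × E) := (DP q).prod (DW q)
def M1 (q : ℝ × E × E) : (ℝ × E × E) →L[ℝ] (E × E) :=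
  (CLMx - (q.1 • CLMv + CLMt.smulRight q.2.2)).prod CLMv

-- smoothness of basic scalar functions
lemma contDiff_xcoord (i : Fin 2) : ContDiff ℝ 1 (fun q : ℝ × E × E => q.2.1 i) := by
  have h := (EuclideanSpace.proj (𝕜 := ℝ) i).contDiff (n := (1 : WithTop ℕ∞))
  exact h.comp ((contDiff_fst).comp contDiff_snd)

lemma contDiff_vcoord (i : Fin 2) : ContDiff ℝ 1 (fun q : ℝ × E × E => q.2.2 i) := by
  have h := (EuclideanSpace.proj (𝕜 := ℝ) i).contDiff (n := (1 : WithTop ℕ∞))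
  exact h.comp ((contDiff_snd).comp contDiff_snd)

lemma contDiff_dotxv : ContDiff ℝ 1 (fun q : ℝ × E × E => dot q.2.1 q.2.2) := by
  simp only [dot]
  exact ((contDiff_xcoord 0).mul (contDiff_vcoord 0)).add
    ((contDiff_xcoord 1).mul (contDiff_vcoord 1))

lemma contDiff_normx : ContDiff ℝ 1 (fun q : ℝ × E × E => ‖q.2.1‖ ^ 2) := by
  have : (fun q : ℝ × E × E => ‖q.2.1‖ ^ 2) =
      fun q => q.2.1 0 ^ 2 + q.2.1 1 ^ 2 := funext fun q => norm_sq_coord q.2.1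
  rw [this]
  exact ((contDiff_xcoord 0).pow 2).add ((contDiff_xcoord 1).pow 2)

lemma contDiff_normv : ContDiff ℝ 1 (fun q : ℝ × E × E => ‖q.2.2‖ ^ 2) := by
  have : (fun q : ℝ × E × E => ‖q.2.2‖ ^ 2) =
      fun q => q.2.2 0 ^ 2 + q.2.2 1 ^ 2 := funext fun q => norm_sq_coord q.2.2
  rw [this]
  exact ((contDiff_vcoord 0).pow 2).add ((contDiff_vcoord 1).pow 2)

lemma contDiff_Dqf : ContDiff ℝ 1 (fun q : ℝ × E × E => Dq q.2.1 q.2.2) := by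
  simp only [Dq]
  exact (contDiff_dotxv.pow 2).add (contDiff_normv.mul (contDiff_const.sub contDiff_normx))

lemma contDiffAt_Tq {q : ℝ × E × E} (hv : q.2.2 ≠ 0) (hD : 0 < Dq q.2.1 q.2.2) :
    ContDiffAt ℝ 1 Tq q := by
  have h1 : ContDiffAt ℝ 1 (fun q : ℝ × E × E => Real.sqrt (Dq q.2.1 q.2.2)) q :=
    (Real.contDiffAt_sqrt hD.ne').comp q contDiff_Dqf.contDiffAt
  have h2 : ContDiffAt ℝ 1 (fun q : ℝ × E × E => dot q.2.1 q.2.2 + Real.sqrt (Dq q.2.1 q.2.2)) q :=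
    contDiff_dotxv.contDiffAt.add h1
  exact h2.div contDiff_normv.contDiffAt (normv_pos hv).ne'

lemma isOpen_Oset : IsOpen Oset := by
  have hv : Continuous (fun q : ℝ × E × E => q.2.2) := continuous_snd.snd
  have hDc : Continuous (fun q : ℝ × E × E => Dq q.2.1 q.2.2) := contDiff_Dqf.continuous
  have h1 : IsOpen {q : ℝ × E × E | q.2.2 ≠ 0 ∧ 0 < Dq q.2.1 q.2.2 ∧ 0 < q.1} := by
    refine (isOpen_compl_singleton.preimage hv).inter
      ((isOpen_Ioi.preimage hDc).inter (isOpen_Ioi.preimage continuous_fst))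
  have hcont : ContinuousOn
      (fun q : ℝ × E × E => Tq q + 2 * Real.sqrt (Dq q.2.1 q.2.2) / ‖q.2.2‖ ^ 2 - q.1)
      {q : ℝ × E × E | q.2.2 ≠ 0 ∧ 0 < Dq q.2.1 q.2.2 ∧ 0 < q.1} := by
    apply ContinuousOn.sub ?_ continuousOn_fst
    apply ContinuousOn.add
    · intro q hq
      exact ((contDiffAt_Tq hq.1 hq.2.1).continuousAt).continuousWithinAt
    · apply ContinuousOn.div
      · exact (continuous_const.mul (Real.continuous_sqrt.comp hDc)).continuousOn
      · exact (contDiff_normv.continuous).continuousOn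
      · intro q hq
        exact (normv_pos hq.1).ne'
  have heq : Oset = {q : ℝ × E × E | q.2.2 ≠ 0 ∧ 0 < Dq q.2.1 q.2.2 ∧ 0 < q.1} ∩
      (fun q : ℝ × E × E => Tq q + 2 * Real.sqrt (Dq q.2.1 q.2.2) / ‖q.2.2‖ ^ 2 - q.1) ⁻¹'
        (Ioi 0) := by
    ext q
    simp only [Oset, mem_setOf_eq, mem_inter_iff, mem_preimage, mem_Ioi, Tq]
    constructor
    · rintro ⟨a, b, c, d⟩; exact ⟨⟨a, b, c⟩, by linarith⟩
    · rintro ⟨⟨a, b, c⟩, d⟩; exact ⟨a, b, c, by linarith⟩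
  rw [heq]
  exact hcont.isOpen_inter_preimage h1 isOpen_Ioi

lemma contDiffOn_Tq : ContDiffOn ℝ 1 Tq Oset := fun q hq =>
  (contDiffAt_Tq hq.1 hq.2.1).contDiffWithinAt

lemma hasFDerivAt_Tq {q : ℝ × E × E} (hq : q ∈ Oset) : HasFDerivAt Tq (LTq q) q :=
  ((contDiffAt_Tq hq.1 hq.2.1).differentiableAt one_ne_zero).hasFDerivAt

lemma hasFDerivAt_Xf {q : ℝ × E × E} (hq : q ∈ Oset) : HasFDerivAt Xf (DX q) q := by
  have h := CLMx.hasFDerivAt (x := q) |>.sub ((hasFDerivAt_Tq hq).smul (CLMv.hasFDerivAt (x := q)))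
  exact h

lemma sf_eq_inner (q : ℝ × E × E) : sf q = (inner ℝ q.2.2 (Xf q) : ℝ) := (inner_eq_dot _ _).symm

lemma hasFDerivAt_sf {q : ℝ × E × E} (hq : q ∈ Oset) : HasFDerivAt sf (Ds q) q := by
  have h := (CLMv.hasFDerivAt (x := q)).inner ℝ (hasFDerivAt_Xf hq)
  have he : (fun t : ℝ × E × E => (inner ℝ (CLMv t) (Xf t) : ℝ)) = sf :=
    funext fun t => (sf_eq_inner t).symm
  rw [he] at h
  have heq : Ds q = (fderivInnerCLM ℝ ((CLMv : (ℝ × E × E) →L[ℝ] E) q, Xf q)).comp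
      ((CLMv : (ℝ × E × E) →L[ℝ] E).prod (DX q)) := by
    refine ContinuousLinearMap.ext fun δ => ?_
    simp only [Ds, ContinuousLinearMap.add_apply, ContinuousLinearMap.coe_comp',
      Function.comp_apply, innerSL_apply_apply, fderivInnerCLM_apply, ContinuousLinearMap.prod_apply,
      CLMv_apply]
    rw [real_inner_comm]
    ring
  rw [heq]
  exact h

lemma Wf_eq (q : ℝ × E × E) : Wf q = q.2.2 - (2 * sf q) • Xf q := rfl

lemma hasFDerivAt_Wf {q : ℝ × E × E} (hq : q ∈ Oset) : HasFDerivAt Wf (DW q) q := by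
  have hc : HasFDerivAt (fun q : ℝ × E × E => 2 * sf q) ((2 : ℝ) • Ds q) q :=
    (hasFDerivAt_sf hq).const_mul 2
  have h := (CLMv.hasFDerivAt (x := q)).sub (hc.smul (hasFDerivAt_Xf hq))
  exact h

lemma hasFDerivAt_tau {q : ℝ × E × E} (hq : q ∈ Oset) :
    HasFDerivAt (fun q : ℝ × E × E => q.1 - Tq q) (Dtau q) q :=
  (CLMt.hasFDerivAt (x := q)).sub (hasFDerivAt_Tq hq)

lemma hasFDerivAt_Pf {q : ℝ × E × E} (hq : q ∈ Oset) : HasFDerivAt Pf (DP q) q := by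
  have h := (hasFDerivAt_Xf hq).sub ((hasFDerivAt_tau hq).smul (hasFDerivAt_Wf hq))
  exact h

lemma hasFDerivAt_Psi2 {q : ℝ × E × E} (hq : q ∈ Oset) : HasFDerivAt Psi2 (M2 q) q :=
  (hasFDerivAt_Pf hq).prodMk (hasFDerivAt_Wf hq)

lemma hasFDerivAt_Psi1 (q : ℝ × E × E) : HasFDerivAt Psi1 (M1 q) q := by
  have h := (CLMx.hasFDerivAt (x := q)).sub
    ((CLMt.hasFDerivAt (x := q)).smul (CLMv.hasFDerivAt (x := q)))
  exact h.prodMk (CLMv.hasFDerivAt (x := q))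

-- CHUNK 4: continuity of derivative fields, S facts, mapsTo ---------------
lemma S_mem_iff (p : E × E) : p ∈ S ↔ ‖p.1‖ ≤ 1 := Iff.rfl

lemma convex_S : Convex ℝ S := by
  have : S = (Metric.closedBall (0 : E) 1) ×ˢ (univ : Set E) := by
    ext p
    simp [S, Metric.mem_closedBall, dist_zero_right]
  rw [this]
  exact (convex_closedBall _ _).prod convex_univ

lemma interior_S_nonempty : (interior S).Nonempty := by
  refine ⟨((0 : E), (0 : E)), ?_⟩
  rw [mem_interior]
  refine ⟨{p : E × E | ‖p.1‖ < 1}, fun p hp => show ‖p.1‖ ≤ 1 from le_of_lt hp, ?_, by simp⟩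
  have : {p : E × E | ‖p.1‖ < 1} = (fun p : E × E => ‖p.1‖) ⁻¹' Iio 1 := rfl
  rw [this]
  exact isOpen_Iio.preimage (continuous_norm.comp continuous_fst)

lemma uniqueDiffOn_S : UniqueDiffOn ℝ S := uniqueDiffOn_convex convex_S interior_S_nonempty

lemma uniqueDiffOn_U : UniqueDiffOn ℝ U := by
  rw [U_eq]
  intro q hq
  have h1 : UniqueDiffWithinAt ℝ Cset q := by
    apply uniqueDiffOn_convex ?_ ?_ q hq.1
    · have : Cset = (univ : Set ℝ) ×ˢ ((Metric.closedBall (0 : E) 1) ×ˢ (univ : Set E)) := by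
        ext p; simp [Cset, Metric.mem_closedBall, dist_zero_right]
      rw [this]
      exact convex_univ.prod ((convex_closedBall _ _).prod convex_univ)
    · refine ⟨((0 : ℝ), (0 : E), (0 : E)), ?_⟩
      rw [mem_interior]
      refine ⟨{p : ℝ × E × E | ‖p.2.1‖ < 1}, fun p hp => show ‖p.2.1‖ ≤ 1 from le_of_lt hp, ?_, by simp⟩
      have : {p : ℝ × E × E | ‖p.2.1‖ < 1} = (fun p : ℝ × E × E => ‖p.2.1‖) ⁻¹' Iio 1 := rfl
      rw [this]
      exact isOpen_Iio.preimage (continuous_norm.comp continuous_snd.fst)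
  exact h1.inter (isOpen_Oset.mem_nhds hq.2)

lemma continuousOn_LTq : ContinuousOn LTq Oset :=
  contDiffOn_Tq.continuousOn_fderiv_of_isOpen isOpen_Oset le_rfl

lemma continuousOn_Tq : ContinuousOn Tq Oset := contDiffOn_Tq.continuousOn

lemma continuousOn_Xf : ContinuousOn Xf Oset :=
  (continuous_snd.fst.continuousOn).sub (continuousOn_Tq.smul continuous_snd.snd.continuousOn)

lemma continuousOn_sf : ContinuousOn sf Oset := by
  have : sf = fun q : ℝ × E × E => (inner ℝ q.2.2 (Xf q) : ℝ) := funext sf_eq_inner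
  rw [this]
  exact ContinuousOn.inner continuous_snd.snd.continuousOn continuousOn_Xf

lemma continuousOn_Wf : ContinuousOn Wf Oset := by
  have : Wf = fun q : ℝ × E × E => q.2.2 - (2 * sf q) • Xf q := rfl
  rw [this]
  exact continuous_snd.snd.continuousOn.sub
    ((continuousOn_const.mul continuousOn_sf).smul continuousOn_Xf)

lemma continuousOn_Pf : ContinuousOn Pf Oset := by
  have : Pf = fun q : ℝ × E × E => Xf q - (q.1 - Tq q) • Wf q := rfl
  rw [this]
  exact continuousOn_Xf.sub
    ((continuous_fst.continuousOn.sub continuousOn_Tq).smul continuousOn_Wf)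

lemma continuousOn_Psi2 : ContinuousOn Psi2 Oset := continuousOn_Pf.prodMk continuousOn_Wf
lemma continuousOn_Psi1 : Continuous Psi1 := by
  have : Psi1 = fun q : ℝ × E × E => (q.2.1 - q.1 • q.2.2, q.2.2) := rfl
  rw [this]
  exact (continuous_snd.fst.sub (continuous_fst.smul continuous_snd.snd)).prodMk
    continuous_snd.snd

lemma continuousOn_DX : ContinuousOn DX Oset := by
  have : DX = fun q => CLMx - (Tq q • CLMv + (ContinuousLinearMap.smulRightL ℝ (ℝ × E × E) E
      (LTq q)) q.2.2) := rfl
  rw [this]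
  apply continuousOn_const.sub
  apply ContinuousOn.add
  · exact continuousOn_Tq.smul continuousOn_const
  · exact (((ContinuousLinearMap.smulRightL ℝ (ℝ × E × E) E).continuous.comp_continuousOn
      continuousOn_LTq).clm_apply continuous_snd.snd.continuousOn)

lemma continuousOn_Ds : ContinuousOn Ds Oset := by
  apply ContinuousOn.add
  · exact (((innerSL ℝ (E := E)).continuous.comp_continuousOn continuousOn_Xf).clm_comp
      continuousOn_const)
  · exact (((innerSL ℝ (E := E)).continuous.comp_continuousOn
      continuous_snd.snd.continuousOn).clm_comp continuousOn_DX)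

lemma continuousOn_DW : ContinuousOn DW Oset := by
  apply continuousOn_const.sub
  apply ContinuousOn.add
  · exact (continuousOn_const.mul continuousOn_sf).smul continuousOn_DX
  · have : (fun q => ((2 : ℝ) • Ds q).smulRight (Xf q)) = fun q =>
        (ContinuousLinearMap.smulRightL ℝ (ℝ × E × E) E ((2 : ℝ) • Ds q)) (Xf q) := rfl
    rw [this]
    exact ((ContinuousLinearMap.smulRightL ℝ (ℝ × E × E) E).continuous.comp_continuousOn
      (continuousOn_Ds.const_smul (2 : ℝ))).clm_apply continuousOn_Xf

lemma continuousOn_Dtau : ContinuousOn Dtau Oset := continuousOn_const.sub continuousOn_LTq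

lemma continuousOn_DP : ContinuousOn DP Oset := by
  apply continuousOn_DX.sub
  apply ContinuousOn.add
  · exact ((continuous_fst.continuousOn.sub continuousOn_Tq).smul continuousOn_DW)
  · have : (fun q => (Dtau q).smulRight (Wf q)) = fun q =>
        (ContinuousLinearMap.smulRightL ℝ (ℝ × E × E) E (Dtau q)) (Wf q) := rfl
    rw [this]
    exact ((ContinuousLinearMap.smulRightL ℝ (ℝ × E × E) E).continuous.comp_continuousOn
      continuousOn_Dtau).clm_apply continuousOn_Wf

lemma continuousOn_M2 : ContinuousOn M2 Oset := by
  have : M2 = fun q => (ContinuousLinearMap.prodₗᵢ (F := E) (G := E) ℝ (𝕜 := ℝ)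
      (E := ℝ × E × E)) (DP q, DW q) := rfl
  rw [this]
  exact (ContinuousLinearMap.prodₗᵢ ℝ).continuous.comp_continuousOn
    (continuousOn_DP.prodMk continuousOn_DW)

lemma continuous_M1 : Continuous M1 := by
  have : M1 = fun q => (ContinuousLinearMap.prodₗᵢ (F := E) (G := E) ℝ (𝕜 := ℝ)
      (E := ℝ × E × E)) (CLMx - (q.1 • CLMv + (ContinuousLinearMap.smulRightL ℝ (ℝ × E × E) E
        CLMt) q.2.2), CLMv) := rfl
  rw [this]
  apply (ContinuousLinearMap.prodₗᵢ ℝ).continuous.comp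
  apply Continuous.prodMk ?_ continuous_const
  apply continuous_const.sub
  apply Continuous.add
  · exact continuous_fst.smul continuous_const
  · exact ((ContinuousLinearMap.smulRightL ℝ (ℝ × E × E) E CLMt).continuous.comp
      continuous_snd.snd)

-- maps to S
lemma mapsTo_Psi1 : MapsTo Psi1 (U ∩ {q | q.1 ≤ Tq q}) S := by
  rintro q ⟨hq, hle⟩
  exact norm_Psi1_le hq hle

lemma mapsTo_Psi2 : MapsTo Psi2 (U ∩ {q | Tq q ≤ q.1}) S := by
  rintro q ⟨hq, hge⟩
  exact norm_Pf_le hq hge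

-- CHUNK 5: the key identities ----------------------------------------------
def Aact (v n η : E) : E :=
  dot v n • η + dot v η • n - dot n η • v - (dot n η * ‖v‖ ^ 2 / dot v n) • n

lemma Amat_mulV (v n η : E) (hc : dot v n ≠ 0) : mulV (Amat v n) η = Aact v n η := by
  have hc' : v 0 * n 0 + v 1 * n 1 ≠ 0 := by simpa [dot] using hc
  apply ext2 <;>
  · simp only [Amat, Aact, mulV, outer, toE, WithLp.equiv_symm_apply, PiLp.toLp_apply, dot,
      Matrix.mul_apply, Fin.sum_univ_two, Matrix.one_apply, Matrix.add_apply, Matrix.sub_apply,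
      Matrix.smul_apply, Matrix.of_apply, smul_eq_mul, PiLp.add_apply, PiLp.sub_apply,
      PiLp.smul_apply, norm_sq_coord]
    norm_num
    field_simp [hc', show v 0 * n 0 + n 1 * v 1 ≠ 0 by contrapose! hc'; linarith]
    ring

lemma dot_vMulM (w : E) (M : Matrix (Fin 2) (Fin 2) ℝ) (η : E) :
    dot (vMulM w M) η = dot w (mulV M η) := by
  simp only [vMulM, mulV, dot, toE, WithLp.equiv_symm_apply, PiLp.toLp_apply]
  ring

lemma dot_sub (a b η : E) : dot (a - b) η = dot a η - dot b η := by
  simp only [dot, PiLp.sub_apply]; ring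

lemma dot_smul (c : ℝ) (a η : E) : dot (c • a) η = c * dot a η := by
  simp only [dot, PiLp.smul_apply, smul_eq_mul]; ring

lemma pair_decomp (η : E) : ((η, (0 : E)) : E × E) =
    η 0 • ((EuclideanSpace.single 0 1 : E), (0 : E)) +
      η 1 • ((EuclideanSpace.single 1 1 : E), (0 : E)) := by
  refine Prod.ext ?_ ?_
  · apply ext2 <;> simp [EuclideanSpace.single_apply, PiLp.add_apply, PiLp.smul_apply]
  · simp

lemma pair_decomp' (η : E) : (((0 : E), η) : E × E) =
    η 0 • (((0 : E), EuclideanSpace.single 0 1) : E × E) +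
      η 1 • ((0 : E), EuclideanSpace.single 1 1) := by
  refine Prod.ext ?_ ?_
  · simp
  · apply ext2 <;> simp [EuclideanSpace.single_apply, PiLp.add_apply, PiLp.smul_apply]

lemma dot_gradx (f₀ : E × E → ℝ) (x v η : E) :
    dot (gradx f₀ x v) η = fderivWithin ℝ f₀ S (x, v) (η, 0) := by
  rw [pair_decomp η, map_add, _root_.map_smul, _root_.map_smul]
  simp only [gradx, dot, toE, WithLp.equiv_symm_apply, PiLp.toLp_apply, smul_eq_mul]
  ring

lemma dot_gradv (f₀ : E × E → ℝ) (x v η : E) :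
    dot (gradv f₀ x v) η = fderivWithin ℝ f₀ S (x, v) (0, η) := by
  rw [pair_decomp' η, map_add, _root_.map_smul, _root_.map_smul]
  simp only [gradv, dot, toE, WithLp.equiv_symm_apply, PiLp.toLp_apply, smul_eq_mul]
  ring

def refCLM (b : E) : E →L[ℝ] E :=
  ContinuousLinearMap.id ℝ E - (innerSL ℝ b).smulRight ((2 : ℝ) • b)

lemma refCLM_apply (b u : E) : refCLM b u = reflect b u := by
  simp only [refCLM, reflect, ContinuousLinearMap.sub_apply, ContinuousLinearMap.coe_id', id_eq,
    ContinuousLinearMap.smulRight_apply, innerSL_apply_apply, inner_eq_dot]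
  rw [smul_smul, dot_comm b u, mul_comm]

lemma keyv (f₀ : E × E → ℝ) (hf : ContDiffOn ℝ 1 f₀ S)
    (hbc : ∀ x v : E, ‖x‖ = 1 → f₀ (x, v) = f₀ (x, mulV (Rmat x) v))
    {b : E} (hb : ‖b‖ = 1) (u w : E) :
    fderivWithin ℝ f₀ S (b, u) (0, w) =
      fderivWithin ℝ f₀ S (b, reflect b u) (0, reflect b w) := by
  have hbS : ∀ z : E, ((b, z) : E × E) ∈ S := fun z => le_of_eq hb
  have hd1 : DifferentiableWithinAt ℝ f₀ S (b, u) := (hf.differentiableOn one_ne_zero) _ (hbS u)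
  have hd2 : DifferentiableWithinAt ℝ f₀ S (b, reflect b u) :=
    (hf.differentiableOn one_ne_zero) _ (hbS _)
  -- inclusion maps
  have hι : HasFDerivAt (fun z : E => ((b, z) : E × E)) (ContinuousLinearMap.inr ℝ E E) u := by
    have he : (fun z : E => ((b, z) : E × E)) =
        fun z => ((b, 0) : E × E) + (ContinuousLinearMap.inr ℝ E E) z := by
      funext z; simp
    rw [he]
    exact ((ContinuousLinearMap.inr ℝ E E).hasFDerivAt).const_add _
  have hκ : HasFDerivAt (fun z : E => ((b, reflect b z) : E × E))
      ((ContinuousLinearMap.inr ℝ E E).comp (refCLM b)) u := by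
    have he : (fun z : E => ((b, reflect b z) : E × E)) =
        fun z => ((b, 0) : E × E) + ((ContinuousLinearMap.inr ℝ E E).comp (refCLM b)) z := by
      funext z
      simp [refCLM_apply]
    rw [he]
    exact (((ContinuousLinearMap.inr ℝ E E).comp (refCLM b)).hasFDerivAt).const_add _
  have h1 : HasFDerivAt (fun z : E => f₀ (b, z))
      ((fderivWithin ℝ f₀ S (b, u)).comp (ContinuousLinearMap.inr ℝ E E)) u := by
    have := (hd1.hasFDerivWithinAt.comp u (hι.hasFDerivWithinAt (s := univ)) (fun z _ => hbS z))
    rwa [hasFDerivWithinAt_univ] at this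
  have h2 : HasFDerivAt (fun z : E => f₀ (b, reflect b z))
      ((fderivWithin ℝ f₀ S (b, reflect b u)).comp
        ((ContinuousLinearMap.inr ℝ E E).comp (refCLM b))) u := by
    have := (hd2.hasFDerivWithinAt.comp u (hκ.hasFDerivWithinAt (s := univ)) (fun z _ => hbS _))
    rwa [hasFDerivWithinAt_univ] at this
  have heq : (fun z : E => f₀ (b, z)) = fun z : E => f₀ (b, reflect b z) := by
    funext z
    rw [hbc b z hb, reflect_eq_mulV]
  rw [heq] at h1
  have huniq := h2.unique h1
  have := congrArg (fun (L : E →L[ℝ] ℝ) => L w) huniq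
  simpa [refCLM_apply] using this.symm

lemma keyx (f₀ : E × E → ℝ)
    (hcomp : ∀ x v : E, ‖x‖ = 1 → dot v x < 0 →
      gradx f₀ x v =
        vMulM (gradx f₀ x (mulV (Rmat x) v)) (Rmat x) -
          (2 : ℝ) • vMulM (gradv f₀ x (mulV (Rmat x) v)) (Amat v x))
    {b v : E} (hb : ‖b‖ = 1) (hc : dot v b < 0) (η : E) :
    fderivWithin ℝ f₀ S (b, v) (η, 0) =
      fderivWithin ℝ f₀ S (b, reflect b v) (reflect b η, 0) -
        2 * fderivWithin ℝ f₀ S (b, reflect b v) (0, Aact v b η) := by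
  have h := hcomp b v hb hc
  rw [reflect_eq_mulV] at h
  have hdot := congrArg (fun w => dot w η) h
  rw [dot_gradx, dot_sub, dot_smul, dot_vMulM, dot_vMulM, reflect_eq_mulV,
    Amat_mulV _ _ _ hc.ne, dot_gradx, dot_gradv] at hdot
  exact hdot

lemma key (f₀ : E × E → ℝ) (hf : ContDiffOn ℝ 1 f₀ S)
    (hbc : ∀ x v : E, ‖x‖ = 1 → f₀ (x, v) = f₀ (x, mulV (Rmat x) v))
    (hcomp : ∀ x v : E, ‖x‖ = 1 → dot v x < 0 →
      gradx f₀ x v =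
        vMulM (gradx f₀ x (mulV (Rmat x) v)) (Rmat x) -
          (2 : ℝ) • vMulM (gradv f₀ x (mulV (Rmat x) v)) (Amat v x))
    {b v : E} (hb : ‖b‖ = 1) (hc : dot v b < 0) (η w : E) :
    fderivWithin ℝ f₀ S (b, v) (η, w) =
      fderivWithin ℝ f₀ S (b, reflect b v)
        (reflect b η, reflect b w - (2 : ℝ) • Aact v b η) := by
  have hsplit : ((η, w) : E × E) = (η, 0) + (0, w) := by simp
  have hsplit2 : ((reflect b η, reflect b w - (2 : ℝ) • Aact v b η) : E × E) =
      ((reflect b η, (0 : E)) : E × E) + (0, reflect b w) +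
        (-(2 : ℝ)) • (((0 : E), Aact v b η) : E × E) := by
    refine Prod.ext ?_ ?_ <;>
    · simp only [Prod.fst_add, Prod.snd_add, Prod.smul_fst, Prod.smul_snd]
      module
  rw [hsplit, map_add, hsplit2, map_add, map_add, _root_.map_smul,
    keyx f₀ hcomp hb hc η, keyv f₀ hf hbc hb v w]
  simp only [smul_eq_mul]
  ring

-- CHUNK 5b: interface derivative identity -----------------------------------
lemma dot_v_Xf' {q : ℝ × E × E} (hv : q.2.2 ≠ 0) :
    dot q.2.2 (Xf q) = -Real.sqrt (Dq q.2.1 q.2.2) := by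
  have ha := (normv_pos hv).ne'
  have h : dot q.2.2 (q.2.1 - Tf q.2.1 q.2.2 • q.2.2) =
      dot q.2.2 q.2.1 - Tf q.2.1 q.2.2 * ‖q.2.2‖ ^ 2 := by
    simp only [dot, PiLp.sub_apply, PiLp.smul_apply, smul_eq_mul, norm_sq_coord]; ring
  rw [Xf, h, Tf, dot_comm]
  field_simp
  ring

lemma normsq_Xf_on_O {q : ℝ × E × E} (hq : q ∈ Oset) : dot (Xf q) (Xf q) = 1 := by
  obtain ⟨hv, hD, _, _⟩ := hq
  have h := quad_factor hv hD.le (Tf q.2.1 q.2.2)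
  have h2 : ‖Xf q‖ ^ 2 = 1 := by
    rw [Xf, ← sub_eq_zero]
    rw [h]; ring
  rw [dot_self_eq, h2]

lemma dot_Xf_DX {q : ℝ × E × E} (hq : q ∈ Oset) (δ : ℝ × E × E) :
    dot (Xf q) (DX q δ) = 0 := by
  have hconst : (fun q' => (inner ℝ (Xf q') (Xf q') : ℝ)) =ᶠ[nhds q] fun _ => (1 : ℝ) := by
    filter_upwards [isOpen_Oset.mem_nhds hq] with q' hq'
    rw [inner_eq_dot, normsq_Xf_on_O hq']
  have hder := (hasFDerivAt_Xf hq).inner ℝ (hasFDerivAt_Xf hq)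
  have hzero : HasFDerivAt (fun q' => (inner ℝ (Xf q') (Xf q') : ℝ)) 0 q :=
    (hasFDerivAt_const (𝕜 := ℝ) (1 : ℝ) q).congr_of_eventuallyEq hconst
  have huniq := hder.unique hzero
  have happ := congrArg (fun (L : (ℝ × E × E) →L[ℝ] ℝ) => L δ) huniq
  simp only [ContinuousLinearMap.coe_comp', Function.comp_apply, fderivInnerCLM_apply,
    ContinuousLinearMap.prod_apply, ContinuousLinearMap.zero_apply, inner_eq_dot] at happ
  have h2 : dot (DX q δ) (Xf q) = dot (Xf q) (DX q δ) := dot_comm _ _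
  rw [h2] at happ
  linarith

set_option maxHeartbeats 1000000 in
lemma M_interface {q : ℝ × E × E} (hq : q ∈ Oset) (hieq : q.1 = Tq q) (δ : ℝ × E × E) :
    M2 q δ = ((reflect (Xf q) (δ.2.1 - (q.1 • δ.2.2 + δ.1 • q.2.2)),
        reflect (Xf q) δ.2.2 -
          (2 : ℝ) • Aact q.2.2 (Xf q) (δ.2.1 - (q.1 • δ.2.2 + δ.1 • q.2.2))) : E × E) := by
  have hv : q.2.2 ≠ 0 := hq.1
  have hc : dot q.2.2 (Xf q) ≠ 0 := by
    rw [dot_v_Xf' hv]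
    simpa using (Real.sqrt_pos.mpr hq.2.1).ne'
  have hrel := dot_Xf_DX hq δ
  have hτ0 : q.1 - Tq q = 0 := by rw [hieq]; ring
  -- expand everything in coordinates
  have hc' : q.2.2 0 * Xf q 0 + q.2.2 1 * Xf q 1 ≠ 0 := by simpa [dot] using hc
  simp only [DX, dot, PiLp.sub_apply, PiLp.smul_apply, PiLp.add_apply, smul_eq_mul,
    ContinuousLinearMap.sub_apply, ContinuousLinearMap.add_apply, ContinuousLinearMap.smul_apply,
    ContinuousLinearMap.smulRight_apply, CLMx_apply, CLMv_apply, CLMt_apply] at hrel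
  have hl : (LTq q) δ =
      (Xf q 0 * δ.2.1 0 + Xf q 1 * δ.2.1 1 -
        Tq q * (Xf q 0 * δ.2.2 0 + Xf q 1 * δ.2.2 1)) /
        (q.2.2 0 * Xf q 0 + q.2.2 1 * Xf q 1) := by
    field_simp [show Xf q 0 * q.2.2 0 + Xf q 1 * q.2.2 1 ≠ 0 by contrapose! hc'; linarith]
    linear_combination -hrel
  refine Prod.ext (ext2 ?_ ?_) (ext2 ?_ ?_) <;>
  · simp only [M2, DP, DW, DX, Ds, Dtau, sf, Wf, reflect, Aact, hτ0, hieq, dot, norm_sq_coord,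
      ContinuousLinearMap.prod_apply, ContinuousLinearMap.sub_apply,
      ContinuousLinearMap.add_apply, ContinuousLinearMap.smul_apply,
      ContinuousLinearMap.smulRight_apply, ContinuousLinearMap.coe_comp', Function.comp_apply,
      innerSL_apply_apply, inner_eq_dot, CLMx_apply, CLMv_apply, CLMt_apply,
      PiLp.sub_apply, PiLp.smul_apply, PiLp.add_apply, smul_eq_mul, zero_mul, zero_smul,
      sub_zero]
    rw [hl]
    field_simp [show Xf q 0 * q.2.2 0 + Xf q 1 * q.2.2 1 ≠ 0 by contrapose! hc'; linarith]
    ring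

-- CHUNK 6: assembly of part 1 ------------------------------------------------
lemma U_sub_O : U ⊆ Oset := by rw [U_eq]; exact inter_subset_right

lemma sqrtD_pos {q : ℝ × E × E} (hq : q ∈ Oset) : 0 < Real.sqrt (Dq q.2.1 q.2.2) :=
  Real.sqrt_pos.mpr hq.2.1

lemma dot_v_Xf_neg {q : ℝ × E × E} (hq : q ∈ Oset) : dot q.2.2 (Xf q) < 0 := by
  rw [dot_v_Xf' hq.1]
  simpa using sqrtD_pos hq

lemma interface_eq (f₀ : E × E → ℝ) (hf : ContDiffOn ℝ 1 f₀ S)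
    (hbc : ∀ x v : E, ‖x‖ = 1 → f₀ (x, v) = f₀ (x, mulV (Rmat x) v))
    (hcomp : ∀ x v : E, ‖x‖ = 1 → dot v x < 0 →
      gradx f₀ x v =
        vMulM (gradx f₀ x (mulV (Rmat x) v)) (Rmat x) -
          (2 : ℝ) • vMulM (gradv f₀ x (mulV (Rmat x) v)) (Amat v x))
    {q : ℝ × E × E} (hqU : q ∈ U) (hieq : q.1 = Tq q) :
    (fderivWithin ℝ f₀ S (Psi2 q)).comp (M2 q) =
      (fderivWithin ℝ f₀ S (Psi1 q)).comp (M1 q) := by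
  obtain ⟨hCs, hOs⟩ := U_eq ▸ hqU
  have hx : ‖q.2.1‖ ≤ 1 := hCs
  have hv : q.2.2 ≠ 0 := hOs.1
  have hb : ‖Xf q‖ = 1 := norm_Xf hx hv
  have hc : dot q.2.2 (Xf q) < 0 := dot_v_Xf_neg hOs
  have hPsi2 : Psi2 q = ((Xf q, reflect (Xf q) q.2.2) : E × E) := by
    refine Prod.ext ?_ rfl
    show Pf q = Xf q
    rw [Pf, hieq]
    simp [Tq]
  have hPsi1 : Psi1 q = ((Xf q, q.2.2) : E × E) := by
    refine Prod.ext ?_ rfl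
    show q.2.1 - q.1 • q.2.2 = Xf q
    rw [hieq]; rfl
  refine ContinuousLinearMap.ext fun δ => ?_
  rw [ContinuousLinearMap.comp_apply, ContinuousLinearMap.comp_apply, hPsi1, hPsi2]
  have hM1 : M1 q δ = ((δ.2.1 - (q.1 • δ.2.2 + δ.1 • q.2.2), δ.2.2) : E × E) := by
    simp [M1, ContinuousLinearMap.prod_apply, ContinuousLinearMap.sub_apply,
      ContinuousLinearMap.add_apply, ContinuousLinearMap.smul_apply,
      ContinuousLinearMap.smulRight_apply]
  rw [hM1, key f₀ hf hbc hcomp hb hc (δ.2.1 - (q.1 • δ.2.2 + δ.1 • q.2.2)) δ.2.2,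
    M_interface hOs hieq δ]

lemma Ffun_left (f₀ : E × E → ℝ) {q : ℝ × E × E} (hq : q ∈ U) (h : q.1 ≤ Tq q) :
    Ffun f₀ q = f₀ (Psi1 q) := by
  obtain ⟨hCs, hOs⟩ := U_eq ▸ hq
  rw [Ffun, if_pos]
  · rfl
  · rwa [tb_eq_Tf hCs hOs.1]

lemma Ffun_right (f₀ : E × E → ℝ)
    (hbc : ∀ x v : E, ‖x‖ = 1 → f₀ (x, v) = f₀ (x, mulV (Rmat x) v))
    {q : ℝ × E × E} (hq : q ∈ U) (h : Tq q ≤ q.1) :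
    Ffun f₀ q = f₀ (Psi2 q) := by
  obtain ⟨hCs, hOs⟩ := U_eq ▸ hq
  have hx : ‖q.2.1‖ ≤ 1 := hCs
  have hv : q.2.2 ≠ 0 := hOs.1
  rcases eq_or_lt_of_le h with heq | hlt
  · have hieq : q.1 = Tq q := heq.symm
    rw [Ffun, if_pos (by rw [tb_eq_Tf hx hv]; exact le_of_eq hieq)]
    have h1 : q.2.1 - q.1 • q.2.2 = Xf q := by rw [hieq]; rfl
    have h2 : Psi2 q = ((Xf q, reflect (Xf q) q.2.2) : E × E) := by
      refine Prod.ext ?_ rfl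
      show Pf q = Xf q
      rw [Pf, hieq]
      simp [Tq]
    rw [h1, h2, hbc (Xf q) q.2.2 (norm_Xf hx hv), reflect_eq_mulV]
  · rw [Ffun, if_neg (by rw [tb_eq_Tf hx hv]; exact not_le.mpr hlt)]
    rw [show xb q.2.1 q.2.2 = Xf q from (Xf_eq_xb hx hv).symm, tb_eq_Tf hx hv, reflect_eq_mulV]
    rfl

-- the derivative field
def Fp (f₀ : E × E → ℝ) (q : ℝ × E × E) : (ℝ × E × E) →L[ℝ] ℝ :=
  if q.1 ≤ Tq q then (fderivWithin ℝ f₀ S (Psi1 q)).comp (M1 q)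
  else (fderivWithin ℝ f₀ S (Psi2 q)).comp (M2 q)

lemma hasF_left (f₀ : E × E → ℝ) (hf : ContDiffOn ℝ 1 f₀ S)
    {q : ℝ × E × E} (hq : q ∈ U) (h : q.1 ≤ Tq q) :
    HasFDerivWithinAt (Ffun f₀) ((fderivWithin ℝ f₀ S (Psi1 q)).comp (M1 q))
      (U ∩ {r | r.1 ≤ Tq r}) q := by
  have hg : HasFDerivWithinAt f₀ (fderivWithin ℝ f₀ S (Psi1 q)) S (Psi1 q) :=
    ((hf.differentiableOn one_ne_zero) _ (mapsTo_Psi1 ⟨hq, h⟩)).hasFDerivWithinAt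
  have h1 : HasFDerivWithinAt Psi1 (M1 q) (U ∩ {r | r.1 ≤ Tq r}) q :=
    (hasFDerivAt_Psi1 q).hasFDerivWithinAt
  have hcomp := hg.comp q h1 mapsTo_Psi1
  exact hcomp.congr (fun r hr => Ffun_left f₀ hr.1 hr.2) (Ffun_left f₀ hq h)

lemma hasF_right (f₀ : E × E → ℝ) (hf : ContDiffOn ℝ 1 f₀ S)
    (hbc : ∀ x v : E, ‖x‖ = 1 → f₀ (x, v) = f₀ (x, mulV (Rmat x) v))
    {q : ℝ × E × E} (hq : q ∈ U) (h : Tq q ≤ q.1) :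
    HasFDerivWithinAt (Ffun f₀) ((fderivWithin ℝ f₀ S (Psi2 q)).comp (M2 q))
      (U ∩ {r | Tq r ≤ r.1}) q := by
  have hg : HasFDerivWithinAt f₀ (fderivWithin ℝ f₀ S (Psi2 q)) S (Psi2 q) :=
    ((hf.differentiableOn one_ne_zero) _ (mapsTo_Psi2 ⟨hq, h⟩)).hasFDerivWithinAt
  have h1 : HasFDerivWithinAt Psi2 (M2 q) (U ∩ {r | Tq r ≤ r.1}) q :=
    (hasFDerivAt_Psi2 (U_sub_O hq)).hasFDerivWithinAt
  have hcomp := hg.comp q h1 mapsTo_Psi2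
  exact hcomp.congr (fun r hr => Ffun_right f₀ hbc hr.1 hr.2) (Ffun_right f₀ hbc hq h)

lemma open_lt : IsOpen {r ∈ Oset | r.1 < Tq r} := by
  have h := (continuousOn_Tq.sub continuous_fst.continuousOn).isOpen_inter_preimage
    isOpen_Oset (isOpen_Ioi (a := (0:ℝ)))
  have heq : {r ∈ Oset | r.1 < Tq r} =
      Oset ∩ (fun r => Tq r - r.1) ⁻¹' Ioi 0 := by
    ext r; simp only [mem_setOf_eq, mem_inter_iff, mem_preimage, mem_Ioi, sep_setOf]
    constructor
    · rintro ⟨a, b⟩; exact ⟨a, by linarith⟩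
    · rintro ⟨a, b⟩; exact ⟨a, by linarith⟩
  rw [heq]; exact h

lemma open_gt : IsOpen {r ∈ Oset | Tq r < r.1} := by
  have h := (continuous_fst.continuousOn.sub continuousOn_Tq).isOpen_inter_preimage
    isOpen_Oset (isOpen_Ioi (a := (0:ℝ)))
  have heq : {r ∈ Oset | Tq r < r.1} =
      Oset ∩ (fun r => r.1 - Tq r) ⁻¹' Ioi 0 := by
    ext r; simp only [mem_setOf_eq, mem_inter_iff, mem_preimage, mem_Ioi, sep_setOf]
    constructor
    · rintro ⟨a, b⟩; exact ⟨a, by linarith⟩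
    · rintro ⟨a, b⟩; exact ⟨a, by linarith⟩
  rw [heq]; exact h

lemma U_split : (U ∩ {r | r.1 ≤ Tq r}) ∪ (U ∩ {r | Tq r ≤ r.1}) = U := by
  ext r
  constructor
  · rintro (h | h) <;> exact h.1
  · intro hr
    rcases le_total r.1 (Tq r) with h | h
    · exact Or.inl ⟨hr, h⟩
    · exact Or.inr ⟨hr, h⟩

lemma hasF_main (f₀ : E × E → ℝ) (hf : ContDiffOn ℝ 1 f₀ S)
    (hbc : ∀ x v : E, ‖x‖ = 1 → f₀ (x, v) = f₀ (x, mulV (Rmat x) v))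
    (hcomp : ∀ x v : E, ‖x‖ = 1 → dot v x < 0 →
      gradx f₀ x v =
        vMulM (gradx f₀ x (mulV (Rmat x) v)) (Rmat x) -
          (2 : ℝ) • vMulM (gradv f₀ x (mulV (Rmat x) v)) (Amat v x))
    {q : ℝ × E × E} (hq : q ∈ U) :
    HasFDerivWithinAt (Ffun f₀) (Fp f₀ q) U q := by
  rcases lt_trichotomy q.1 (Tq q) with hlt | heq | hgt
  · rw [Fp, if_pos hlt.le]
    apply (hasF_left f₀ hf hq hlt.le).mono_of_mem_nhdsWithin
    rw [mem_nhdsWithin]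
    exact ⟨{r ∈ Oset | r.1 < Tq r}, open_lt, ⟨U_sub_O hq, hlt⟩,
      fun r hr => ⟨hr.2, hr.1.2.le⟩⟩
  · rw [Fp, if_pos heq.le]
    have hA := hasF_left f₀ hf hq heq.le
    have hB := hasF_right f₀ hf hbc hq heq.ge
    rw [interface_eq f₀ hf hbc hcomp hq heq] at hB
    have := hA.union hB
    rwa [U_split] at this
  · rw [Fp, if_neg (not_le.mpr hgt)]
    apply (hasF_right f₀ hf hbc hq hgt.le).mono_of_mem_nhdsWithin
    rw [mem_nhdsWithin]
    exact ⟨{r ∈ Oset | Tq r < r.1}, open_gt, ⟨U_sub_O hq, hgt⟩,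
      fun r hr => ⟨hr.2, hr.1.2.le⟩⟩

lemma contOn_Fp (f₀ : E × E → ℝ) (hf : ContDiffOn ℝ 1 f₀ S)
    (hbc : ∀ x v : E, ‖x‖ = 1 → f₀ (x, v) = f₀ (x, mulV (Rmat x) v))
    (hcomp : ∀ x v : E, ‖x‖ = 1 → dot v x < 0 →
      gradx f₀ x v =
        vMulM (gradx f₀ x (mulV (Rmat x) v)) (Rmat x) -
          (2 : ℝ) • vMulM (gradv f₀ x (mulV (Rmat x) v)) (Amat v x)) :
    ContinuousOn (Fp f₀) U := by
  have hfd : ContinuousOn (fun p : E × E => fderivWithin ℝ f₀ S p) S :=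
    hf.continuousOn_fderivWithin uniqueDiffOn_S le_rfl
  have hPhi1 : ContinuousOn (fun q => (fderivWithin ℝ f₀ S (Psi1 q)).comp (M1 q))
      (U ∩ {r | r.1 ≤ Tq r}) :=
    (hfd.comp continuousOn_Psi1.continuousOn mapsTo_Psi1).clm_comp
      continuous_M1.continuousOn
  have hPhi2 : ContinuousOn (fun q => (fderivWithin ℝ f₀ S (Psi2 q)).comp (M2 q))
      (U ∩ {r | Tq r ≤ r.1}) :=
    (hfd.comp (continuousOn_Psi2.mono (inter_subset_left.trans U_sub_O)) mapsTo_Psi2).clm_comp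
      (continuousOn_M2.mono (inter_subset_left.trans U_sub_O))
  intro p hp
  have hcwA : ContinuousWithinAt (Fp f₀) (U ∩ {r | r.1 ≤ Tq r}) p := by
    rcases le_or_gt p.1 (Tq p) with h | h
    · refine (hPhi1 p ⟨hp, h⟩).congr (fun r hr => ?_) ?_
      · rw [Fp, if_pos (show r.1 ≤ Tq r from hr.2)]
      · rw [Fp, if_pos h]
    · apply continuousWithinAt_of_notMem_closure
      intro hcl
      have : p ∈ closure {r | r.1 ≤ Tq r} := closure_mono inter_subset_right hcl
      have hopen : {r ∈ Oset | Tq r < r.1} ∈ nhds p := open_gt.mem_nhds ⟨U_sub_O hp, h⟩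
      rw [mem_closure_iff_nhds] at this
      obtain ⟨r, hr1, hr2⟩ := this {r ∈ Oset | Tq r < r.1} hopen
      exact absurd hr2 (not_le.mpr hr1.2)
  have hcwB : ContinuousWithinAt (Fp f₀) (U ∩ {r | Tq r ≤ r.1}) p := by
    rcases lt_or_ge p.1 (Tq p) with h | h
    · apply continuousWithinAt_of_notMem_closure
      intro hcl
      have : p ∈ closure {r | Tq r ≤ r.1} := closure_mono inter_subset_right hcl
      have hopen : {r ∈ Oset | r.1 < Tq r} ∈ nhds p := open_lt.mem_nhds ⟨U_sub_O hp, h⟩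
      rw [mem_closure_iff_nhds] at this
      obtain ⟨r, hr1, hr2⟩ := this _ hopen
      exact absurd hr2 (not_le.mpr hr1.2)
    · have hFp2 : ∀ r ∈ U ∩ {r | Tq r ≤ r.1},
          Fp f₀ r = (fderivWithin ℝ f₀ S (Psi2 r)).comp (M2 r) := by
        rintro r ⟨hrU, hr⟩
        rcases lt_or_eq_of_le (show Tq r ≤ r.1 from hr) with h2 | h2
        · rw [Fp, if_neg (not_le.mpr h2)]
        · rw [Fp, if_pos h2.ge, interface_eq f₀ hf hbc hcomp hrU h2.symm]
      refine (hPhi2 p ⟨hp, h⟩).congr hFp2 ?_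
      exact hFp2 p ⟨hp, h⟩
  have := hcwA.union hcwB
  rwa [U_split] at this

lemma part1 (f₀ : E × E → ℝ) (hf : ContDiffOn ℝ 1 f₀ S)
    (hbc : ∀ x v : E, ‖x‖ = 1 → f₀ (x, v) = f₀ (x, mulV (Rmat x) v))
    (hcomp : ∀ x v : E, ‖x‖ = 1 → dot v x < 0 →
      gradx f₀ x v =
        vMulM (gradx f₀ x (mulV (Rmat x) v)) (Rmat x) -
          (2 : ℝ) • vMulM (gradv f₀ x (mulV (Rmat x) v)) (Amat v x)) :
    ContDiffOn ℝ 1 (Ffun f₀) U := by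
  intro p hp
  rw [show (1 : WithTop ℕ∞) = 0 + 1 from (zero_add _).symm,
    contDiffWithinAt_succ_iff_hasFDerivWithinAt (by simp)]
  refine ⟨U, ?_, ?_, Fp f₀, fun r hr => hasF_main f₀ hf hbc hcomp hr, ?_⟩
  · rw [insert_eq_of_mem hp]
    exact self_mem_nhdsWithin
  · intro h; exact absurd h (by simp)
  · exact (contDiffOn_zero.mpr (contOn_Fp f₀ hf hbc hcomp)) p hp

-- CHUNK 7: part 2, the transport equation ------------------------------------
lemma dot_shift (x v : E) (s : ℝ) : dot (x + s • v) v = dot x v + s * ‖v‖ ^ 2 := by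
  simp only [dot, PiLp.add_apply, PiLp.smul_apply, smul_eq_mul, norm_sq_coord]; ring

lemma normsq_shift (x v : E) (s : ℝ) :
    ‖x + s • v‖ ^ 2 = ‖x‖ ^ 2 + 2 * s * dot x v + s ^ 2 * ‖v‖ ^ 2 := by
  simp only [norm_sq_coord, PiLp.add_apply, PiLp.smul_apply, smul_eq_mul, dot]; ring

lemma Dq_shift (x v : E) (s : ℝ) : Dq (x + s • v) v = Dq x v := by
  simp only [Dq, dot_shift, normsq_shift]
  ring

lemma Tf_shift {x v : E} (hv : v ≠ 0) (s : ℝ) : Tf (x + s • v) v = Tf x v + s := by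
  have ha := (normv_pos hv).ne'
  rw [Tf, Tf, Dq_shift, dot_shift]
  field_simp
  ring

lemma Ffun_shift (f₀ : E × E → ℝ) {x v : E} (hx : ‖x‖ ≤ 1) (hv : v ≠ 0) {s : ℝ}
    (hx' : ‖x + s • v‖ ≤ 1) (t : ℝ) :
    Ffun f₀ (t + s, x + s • v, v) = Ffun f₀ (t, x, v) := by
  have htb : tb (x + s • v) v = Tf x v + s := by rw [tb_eq_Tf hx' hv, Tf_shift hv]
  have htb0 : tb x v = Tf x v := tb_eq_Tf hx hv
  have hxb : xb (x + s • v) v = xb x v := by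
    rw [xb, xb, htb, htb0]
    apply ext2 <;> simp [PiLp.add_apply, PiLp.sub_apply, PiLp.smul_apply] <;> ring
  rw [Ffun, Ffun]
  simp only [htb, htb0, hxb]
  have hcond : t + s ≤ Tf x v + s ↔ t ≤ Tf x v := by constructor <;> intro <;> linarith
  rcases le_or_gt t (Tf x v) with h | h
  · rw [if_pos (hcond.mpr h), if_pos h]
    congr 2
    apply ext2 <;> simp [PiLp.add_apply, PiLp.sub_apply, PiLp.smul_apply] <;> ring
  · rw [if_neg (fun hc => absurd (hcond.mp hc) (not_le.mpr h)), if_neg (not_le.mpr h)]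
    congr 3
    ring

lemma curve_mem {p : ℝ × E × E} (hp : p ∈ U) :
    ∃ ε > 0, (∀ s ∈ Icc (0 : ℝ) ε, (p.1 + s, p.2.1 + s • p.2.2, p.2.2) ∈ U) ∨
      (∀ s ∈ Icc (-ε) (0 : ℝ), (p.1 + s, p.2.1 + s • p.2.2, p.2.2) ∈ U) := by
  obtain ⟨hCs, hOs⟩ := U_eq ▸ hp
  obtain ⟨hv, hD, ht, hlt⟩ := hOs
  have ha : 0 < ‖p.2.2‖ ^ 2 := normv_pos hv
  have hmem : ∀ s : ℝ, 0 < p.1 + s → ‖p.2.1 + s • p.2.2‖ ≤ 1 →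
      (p.1 + s, p.2.1 + s • p.2.2, p.2.2) ∈ U := by
    intro s hts hns
    rw [U_eq]
    refine ⟨hns, hv, ?_, hts, ?_⟩
    · show 0 < Dq (p.2.1 + s • p.2.2) p.2.2
      rw [Dq_shift]; exact hD
    · show p.1 + s < Tf (p.2.1 + s • p.2.2) p.2.2 + 2 * Real.sqrt (Dq (p.2.1 + s • p.2.2) p.2.2)
        / ‖p.2.2‖ ^ 2
      rw [Tf_shift hv, Dq_shift]
      linarith
  rcases lt_or_eq_of_le (show ‖p.2.1‖ ≤ 1 from hCs) with hxlt | hxeq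
  · -- interior of the disk: go forward
    refine ⟨min ((1 - ‖p.2.1‖) / ‖p.2.2‖) 1,
      lt_min (div_pos (by linarith) (norm_pos_iff.mpr hv)) one_pos, Or.inl fun s hs => ?_⟩
    apply hmem s (by linarith [hs.1])
    calc ‖p.2.1 + s • p.2.2‖ ≤ ‖p.2.1‖ + ‖s • p.2.2‖ := norm_add_le _ _
      _ = ‖p.2.1‖ + s * ‖p.2.2‖ := by rw [norm_smul, Real.norm_of_nonneg hs.1]
      _ ≤ ‖p.2.1‖ + ((1 - ‖p.2.1‖) / ‖p.2.2‖) * ‖p.2.2‖ := by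
          have hvn : 0 < ‖p.2.2‖ := norm_pos_iff.mpr hv
          have := hs.2
          have h2 : s ≤ (1 - ‖p.2.1‖) / ‖p.2.2‖ := le_trans this (min_le_left _ _)
          nlinarith
      _ = 1 := by
          have hvn : 0 < ‖p.2.2‖ := norm_pos_iff.mpr hv
          field_simp
          ring
  · -- on the circle
    have hd : dot p.2.2 p.2.1 ≠ 0 := by
      intro h0
      rw [Dq, dot_comm] at hD
      rw [h0] at hD
      have h2 : ‖p.2.1‖ ^ 2 = 1 := by rw [hxeq]; norm_num
      rw [h2] at hD
      simp at hD
    have hx2 : ‖p.2.1‖ ^ 2 = 1 := by rw [hxeq]; norm_num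
    rcases hd.lt_or_gt with hneg | hpos
    · -- dot v x < 0 : forward
      have hd' : dot p.2.1 p.2.2 < 0 := by rwa [dot_comm]
      refine ⟨min (-2 * dot p.2.1 p.2.2 / ‖p.2.2‖ ^ 2) 1,
        lt_min (div_pos (by linarith) ha) one_pos, Or.inl fun s hs => ?_⟩
      apply hmem s (by linarith [hs.1])
      have h1 : ‖p.2.1 + s • p.2.2‖ ^ 2 ≤ 1 := by
        rw [normsq_shift, hx2]
        have h2 : s ≤ -2 * dot p.2.1 p.2.2 / ‖p.2.2‖ ^ 2 := le_trans hs.2 (min_le_left _ _)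
        have h3 : s * ‖p.2.2‖ ^ 2 ≤ -2 * dot p.2.1 p.2.2 := by
          have h4 := mul_le_mul_of_nonneg_right h2 ha.le
          have h5 : -2 * dot p.2.1 p.2.2 / ‖p.2.2‖ ^ 2 * ‖p.2.2‖ ^ 2 = -2 * dot p.2.1 p.2.2 := by
            field_simp
          linarith
        nlinarith [hs.1]
      nlinarith [norm_nonneg (p.2.1 + s • p.2.2)]
    · -- dot v x > 0 : backward
      have hd' : 0 < dot p.2.1 p.2.2 := by rwa [dot_comm]
      refine ⟨min (2 * dot p.2.1 p.2.2 / ‖p.2.2‖ ^ 2) (p.1 / 2),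
        lt_min (div_pos (by linarith) ha) (by linarith), Or.inr fun s hs => ?_⟩
      have hsle := hs.2
      have hsge : -(min (2 * dot p.2.1 p.2.2 / ‖p.2.2‖ ^ 2) (p.1 / 2)) ≤ s := hs.1
      have hεt : min (2 * dot p.2.1 p.2.2 / ‖p.2.2‖ ^ 2) (p.1 / 2) ≤ p.1 / 2 :=
        min_le_right _ _
      apply hmem s (by linarith)
      have h1 : ‖p.2.1 + s • p.2.2‖ ^ 2 ≤ 1 := by
        rw [normsq_shift, hx2]
        have h2 : -s ≤ 2 * dot p.2.1 p.2.2 / ‖p.2.2‖ ^ 2 := by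
          have := min_le_left (2 * dot p.2.1 p.2.2 / ‖p.2.2‖ ^ 2) (p.1 / 2)
          linarith
        have h3 : -s * ‖p.2.2‖ ^ 2 ≤ 2 * dot p.2.1 p.2.2 := by
          have h4 := mul_le_mul_of_nonneg_right h2 ha.le
          have h5 : 2 * dot p.2.1 p.2.2 / ‖p.2.2‖ ^ 2 * ‖p.2.2‖ ^ 2 = 2 * dot p.2.1 p.2.2 := by
            field_simp
          linarith
        nlinarith [hsle]
      nlinarith [norm_nonneg (p.2.1 + s • p.2.2)]

lemma part2 (f₀ : E × E → ℝ) (hF : ContDiffOn ℝ 1 (Ffun f₀) U) {p : ℝ × E × E} (hp : p ∈ U) :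
    fderivWithin ℝ (Ffun f₀) U p ((1 : ℝ), 0, 0) +
        p.2.2 0 * fderivWithin ℝ (Ffun f₀) U p (0, EuclideanSpace.single 0 1, 0) +
        p.2.2 1 * fderivWithin ℝ (Ffun f₀) U p (0, EuclideanSpace.single 1 1, 0) = 0 := by
  obtain ⟨hCs, hOs⟩ := U_eq ▸ hp
  have hv : p.2.2 ≠ 0 := hOs.1
  set L := fderivWithin ℝ (Ffun f₀) U p with hL
  have hdiff : DifferentiableWithinAt ℝ (Ffun f₀) U p :=
    (hF p hp).differentiableWithinAt one_ne_zero
  have hLd : HasFDerivWithinAt (Ffun f₀) L U p := hdiff.hasFDerivWithinAt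
  -- the characteristic curve
  set γ : ℝ → ℝ × E × E := fun s => (p.1 + s, p.2.1 + s • p.2.2, p.2.2) with hγ
  have hγ0 : γ 0 = p := by
    rw [hγ]; simp
  have hγd : HasDerivAt γ ((1 : ℝ), p.2.2, 0) 0 := by
    rw [hγ]
    have h1 : HasDerivAt (fun s : ℝ => p.1 + s) 1 0 := by
      simpa using (hasDerivAt_id (0 : ℝ)).const_add p.1
    have h2 : HasDerivAt (fun s : ℝ => p.2.1 + s • p.2.2) p.2.2 0 := by
      have := ((hasDerivAt_id (0 : ℝ)).smul_const p.2.2).const_add p.2.1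
      simpa using this
    have h3 : HasDerivAt (fun _ : ℝ => p.2.2) (0 : E) 0 := hasDerivAt_const _ _
    exact h1.prodMk (h2.prodMk h3)
  obtain ⟨ε, hε, hcase⟩ := curve_mem hp
  have main : ∀ I : Set ℝ, UniqueDiffWithinAt ℝ I 0 → (0 : ℝ) ∈ I →
      (∀ s ∈ I, γ s ∈ U) → L (1, p.2.2, 0) = 0 := by
    intro I hI h0I hmap
    have hLd' : HasFDerivWithinAt (Ffun f₀) L U (γ 0) := hγ0.symm ▸ hLd
    have hcomp : HasDerivWithinAt (Ffun f₀ ∘ γ) (L (1, p.2.2, 0)) I 0 :=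
      hLd'.comp_hasDerivWithinAt 0 (hγd.hasDerivWithinAt (s := I)) (fun s hs => hmap s hs)
    have hconst : HasDerivWithinAt (Ffun f₀ ∘ γ) 0 I 0 := by
      apply (hasDerivWithinAt_const (0 : ℝ) I (Ffun f₀ p)).congr ?_ ?_
      · intro s hs
        show Ffun f₀ (γ s) = Ffun f₀ p
        have hsU := hmap s hs
        have hn : ‖p.2.1 + s • p.2.2‖ ≤ 1 := by
          have := (U_eq ▸ hsU : γ s ∈ Cset ∩ Oset).1
          exact this
        have := Ffun_shift f₀ hCs hv hn p.1
        rw [hγ]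
        simp only
        rw [this]
      · show Ffun f₀ (γ 0) = Ffun f₀ p
        rw [hγ0]
    have h1 := hcomp.derivWithin hI
    have h2 := hconst.derivWithin hI
    rw [h1] at h2
    exact h2
  have hzero : L (1, p.2.2, 0) = 0 := by
    rcases hcase with hA | hA
    · exact main (Icc 0 ε) ((uniqueDiffOn_Icc hε) 0 (by constructor <;> simp [hε.le]))
        (by constructor <;> simp [hε.le]) hA
    · exact main (Icc (-ε) 0) ((uniqueDiffOn_Icc (by linarith)) 0
        (by constructor <;> simp [hε.le])) (by constructor <;> simp [hε.le]) hA
  have hdec : ((1 : ℝ), p.2.2, (0 : E)) = ((1 : ℝ), (0 : E), (0 : E)) +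
      p.2.2 0 • (((0 : ℝ), EuclideanSpace.single 0 1, (0 : E)) : ℝ × E × E) +
      p.2.2 1 • (((0 : ℝ), EuclideanSpace.single 1 1, (0 : E)) : ℝ × E × E) := by
    refine Prod.ext (by simp) (Prod.ext ?_ (by simp))
    apply ext2 <;> simp [EuclideanSpace.single_apply, PiLp.add_apply, PiLp.smul_apply]
  rw [hdec, map_add, map_add, _root_.map_smul, _root_.map_smul] at hzero
  simp only [smul_eq_mul] at hzero
  linarith [hzero]


/-- C¹ regularity through one bounce and the free transport equation. -/
theorem stmt18 (f₀ : E × E → ℝ)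
    (hf : ContDiffOn ℝ 1 f₀ S)
    (hbc : ∀ x v : E, ‖x‖ = 1 → f₀ (x, v) = f₀ (x, mulV (Rmat x) v))
    (hcomp : ∀ x v : E, ‖x‖ = 1 → dot v x < 0 →
      gradx f₀ x v =
        vMulM (gradx f₀ x (mulV (Rmat x) v)) (Rmat x) -
          (2 : ℝ) • vMulM (gradv f₀ x (mulV (Rmat x) v)) (Amat v x)) :
    ContDiffOn ℝ 1 (Ffun f₀) U ∧
    ∀ p ∈ U,
      fderivWithin ℝ (Ffun f₀) U p ((1 : ℝ), 0, 0) +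
          p.2.2 0 * fderivWithin ℝ (Ffun f₀) U p (0, EuclideanSpace.single 0 1, 0) +
          p.2.2 1 * fderivWithin ℝ (Ffun f₀) U p (0, EuclideanSpace.single 1 1, 0) = 0 := by
  have h1 := part1 f₀ hf hbc hcomp
  exact ⟨h1, fun p hp => part2 f₀ h1 hp⟩
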